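/- arXiv:2010.14424 — 6 statements merged into one kernel-verified Lean document; each statement's English description precedes it below -/
import Mathlib

section
/- Assume 0 < β < 1/2, α > 1 − ρ_*(β) and α ≠ ρ_*(β). Suppose that for every ε > 0, (ρ_ε, J_ε) is a classical solution of the area-averaged pedestrian boundary value problem on [0,1] with diffusion ε. Then, as ε → 0⁺, J_ε → β·(1−β)·k(1), ρ_ε(0) → 1 − β·(1−β)·k(1)/(α·k(0)), and ρ_ε(1) → 1 − β. -/
open Set Filter Topology

/-- A classical solution `(ρ, J)` (with derivative `ρ'`) of the area-averaged pedestrian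
boundary value problem on `[0, L]` with diffusion `ε`, inflow rate `α`, outflow rate `β`
and width function `k`. -/
def IsClassicalSolution (L ε α β : ℝ) (k ρ ρ' : ℝ → ℝ) (J : ℝ) : Prop :=
  (∀ x ∈ Icc (0:ℝ) L, HasDerivWithinAt ρ (ρ' x) (Icc 0 L) x) ∧
  ContinuousOn ρ' (Icc 0 L) ∧
  (∀ x ∈ Icc (0:ℝ) L, k x * (-ε * ρ' x + ρ x * (1 - ρ x)) = J) ∧
  -ε * ρ' 0 + ρ 0 * (1 - ρ 0) = α * (1 - ρ 0) ∧
  -ε * ρ' L + ρ L * (1 - ρ L) = β * ρ L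

/-- `ρ_f = (1/2)·(1 − √(1 − k(1)/k(0)))`. -/
noncomputable def rhoF (k : ℝ → ℝ) : ℝ := (1/2) * (1 - Real.sqrt (1 - k 1 / k 0))

/-- `ρ*(α) = (1/2)·(1 − √(1 − 4α(1−α)·k(0)/k(1)))`. -/
noncomputable def rhoStar (α : ℝ) (k : ℝ → ℝ) : ℝ :=
  (1/2) * (1 - Real.sqrt (1 - 4*α*(1-α) * k 0 / k 1))

/-- `ρ_*(β) = (1/2)·(1 + √(1 − 4β(1−β)·k(1)/k(0)))`. -/
noncomputable def rhoStarLow (β : ℝ) (k : ℝ → ℝ) : ℝ :=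
  (1/2) * (1 + Real.sqrt (1 - 4*β*(1-β) * k 1 / k 0))


section PedAux


lemma pedAux_neBot_left {a c : ℝ} (hac : a < c) : (𝓝[Icc a c \ {c}] c).NeBot := by
  rw [Icc_sdiff_right]
  exact mem_closure_iff_nhdsWithin_neBot.mp
    (by rw [closure_Ico hac.ne]; exact ⟨hac.le, le_refl c⟩)

lemma pedAux_neBot_right {c b : ℝ} (hcb : c < b) : (𝓝[Icc c b \ {c}] c).NeBot := by
  rw [Icc_diff_left]
  exact mem_closure_iff_nhdsWithin_neBot.mp
    (by rw [closure_Ioc hcb.ne]; exact ⟨le_refl c, hcb.le⟩)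

/-- Comparison: stay strictly above a barrier, going forward. -/
lemma pedAux_stay_above {a b : ℝ} (hab : a < b) {f u fd ud : ℝ → ℝ}
    (hf : ∀ x ∈ Icc a b, HasDerivWithinAt f (fd x) (Icc a b) x)
    (hu : ∀ x ∈ Icc a b, HasDerivWithinAt u (ud x) (Icc a b) x)
    (h0 : u a < f a)
    (hcross : ∀ x ∈ Icc a b, f x = u x → ud x < fd x) :
    ∀ x ∈ Icc a b, u x < f x := by
  by_contra hcon
  push_neg at hcon
  obtain ⟨x0, hx0, hle⟩ := hcon
  have hφc : ContinuousOn (fun x => f x - u x) (Icc a b) :=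
    ContinuousOn.sub (fun x hx => (hf x hx).continuousWithinAt)
      (fun x hx => (hu x hx).continuousWithinAt)
  set S := {x | x ∈ Icc a b ∧ f x - u x ≤ 0} with hSdef
  have hSeq : S = Icc a b ∩ (fun x => f x - u x) ⁻¹' (Iic 0) := by
    ext x; simp [hSdef, mem_Iic]
  have hSclosed : IsClosed S := by
    rw [hSeq]; exact hφc.preimage_isClosed_of_isClosed isClosed_Icc isClosed_Iic
  have hSne : S.Nonempty := ⟨x0, hx0, by linarith⟩
  have hbdd : BddBelow S := ⟨a, fun x hx => hx.1.1⟩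
  set c := sInf S with hc
  have hcS : c ∈ S := hSclosed.csInf_mem hSne hbdd
  have hca : a < c := by
    rcases lt_or_eq_of_le hcS.1.1 with h | h
    · exact h
    · exfalso; have := hcS.2; rw [← h] at this; linarith
  have hlt : ∀ x, a ≤ x → x < c → 0 < f x - u x := by
    intro x hax hxc
    by_contra h
    push_neg at h
    have hxm : x ∈ S := ⟨⟨hax, le_trans hxc.le hcS.1.2⟩, h⟩
    exact absurd (csInf_le hbdd hxm) (not_le.mpr hxc)
  have hφc0 : f c - u c = 0 := by
    rcases lt_or_eq_of_le hcS.2 with h | h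
    · exfalso
      have hcont : ContinuousWithinAt (fun x => f x - u x) (Icc a b) c := hφc c hcS.1
      have hev : ∀ᶠ y in 𝓝[Icc a b] c, f y - u y < 0 := hcont (Iio_mem_nhds h)
      have hne : (𝓝[Icc a c \ {c}] c).NeBot := pedAux_neBot_left hca
      have hmono : 𝓝[Icc a c \ {c}] c ≤ 𝓝[Icc a b] c :=
        nhdsWithin_mono c (fun y hy => ⟨hy.1.1, le_trans hy.1.2 hcS.1.2⟩)
      have hev2 : ∀ᶠ y in 𝓝[Icc a c \ {c}] c, f y - u y < 0 := hev.filter_mono hmono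
      obtain ⟨y, hy1, hy2⟩ := (hev2.and eventually_mem_nhdsWithin).exists
      have hyne : y ≠ c := by simpa using hy2.2
      have : 0 < f y - u y := hlt y hy2.1.1 (lt_of_le_of_ne hy2.1.2 hyne)
      linarith
    · exact h
  have hdpos : 0 < fd c - ud c := sub_pos.mpr (hcross c hcS.1 (by linarith))
  have hd : HasDerivWithinAt (fun x => f x - u x) (fd c - ud c) (Icc a c) c :=
    ((hf c hcS.1).sub (hu c hcS.1)).mono (Icc_subset_Icc_right hcS.1.2)
  rw [hasDerivWithinAt_iff_tendsto_slope] at hd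
  have hne : (𝓝[Icc a c \ {c}] c).NeBot := pedAux_neBot_left hca
  have hsl : ∀ᶠ y in 𝓝[Icc a c \ {c}] c, slope (fun x => f x - u x) c y ≤ 0 := by
    filter_upwards [eventually_mem_nhdsWithin] with y hy
    have hyne : y ≠ c := by simpa using hy.2
    have hyc : y < c := lt_of_le_of_ne hy.1.2 hyne
    have h1 : 0 < f y - u y := hlt y hy.1.1 hyc
    rw [slope_def_field]
    apply div_nonpos_of_nonneg_of_nonpos
    · rw [hφc0]; linarith
    · linarith
  have := le_of_tendsto hd hsl
  linarith

/-- Comparison: stay strictly above a barrier, going backward. -/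
lemma pedAux_stay_above_rev {a b : ℝ} (hab : a < b) {f u fd ud : ℝ → ℝ}
    (hf : ∀ x ∈ Icc a b, HasDerivWithinAt f (fd x) (Icc a b) x)
    (hu : ∀ x ∈ Icc a b, HasDerivWithinAt u (ud x) (Icc a b) x)
    (h0 : u b < f b)
    (hcross : ∀ x ∈ Icc a b, f x = u x → fd x < ud x) :
    ∀ x ∈ Icc a b, u x < f x := by
  by_contra hcon
  push_neg at hcon
  obtain ⟨x0, hx0, hle⟩ := hcon
  have hφc : ContinuousOn (fun x => f x - u x) (Icc a b) :=
    ContinuousOn.sub (fun x hx => (hf x hx).continuousWithinAt)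
      (fun x hx => (hu x hx).continuousWithinAt)
  set S := {x | x ∈ Icc a b ∧ f x - u x ≤ 0} with hSdef
  have hSeq : S = Icc a b ∩ (fun x => f x - u x) ⁻¹' (Iic 0) := by
    ext x; simp [hSdef, mem_Iic]
  have hSclosed : IsClosed S := by
    rw [hSeq]; exact hφc.preimage_isClosed_of_isClosed isClosed_Icc isClosed_Iic
  have hSne : S.Nonempty := ⟨x0, hx0, by linarith⟩
  have hbdd : BddAbove S := ⟨b, fun x hx => hx.1.2⟩
  set c := sSup S with hc
  have hcS : c ∈ S := hSclosed.csSup_mem hSne hbdd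
  have hcb : c < b := by
    rcases lt_or_eq_of_le hcS.1.2 with h | h
    · exact h
    · exfalso; have := hcS.2; rw [h] at this; linarith
  have hlt : ∀ x, c < x → x ≤ b → 0 < f x - u x := by
    intro x hcx hxb
    by_contra h
    push_neg at h
    have hxm : x ∈ S := ⟨⟨le_trans hcS.1.1 hcx.le, hxb⟩, h⟩
    exact absurd (le_csSup hbdd hxm) (not_le.mpr hcx)
  have hφc0 : f c - u c = 0 := by
    rcases lt_or_eq_of_le hcS.2 with h | h
    · exfalso
      have hcont : ContinuousWithinAt (fun x => f x - u x) (Icc a b) c := hφc c hcS.1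
      have hev : ∀ᶠ y in 𝓝[Icc a b] c, f y - u y < 0 := hcont (Iio_mem_nhds h)
      have hne : (𝓝[Icc c b \ {c}] c).NeBot := pedAux_neBot_right hcb
      have hmono : 𝓝[Icc c b \ {c}] c ≤ 𝓝[Icc a b] c :=
        nhdsWithin_mono c (fun y hy => ⟨le_trans hcS.1.1 hy.1.1, hy.1.2⟩)
      have hev2 : ∀ᶠ y in 𝓝[Icc c b \ {c}] c, f y - u y < 0 := hev.filter_mono hmono
      obtain ⟨y, hy1, hy2⟩ := (hev2.and eventually_mem_nhdsWithin).exists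
      have hyne : y ≠ c := by simpa using hy2.2
      have : 0 < f y - u y := hlt y (lt_of_le_of_ne hy2.1.1 (Ne.symm hyne)) hy2.1.2
      linarith
    · exact h
  have hdneg : fd c - ud c < 0 := sub_neg.mpr (hcross c hcS.1 (by linarith))
  have hd : HasDerivWithinAt (fun x => f x - u x) (fd c - ud c) (Icc c b) c :=
    ((hf c hcS.1).sub (hu c hcS.1)).mono (Icc_subset_Icc_left hcS.1.1)
  rw [hasDerivWithinAt_iff_tendsto_slope] at hd
  have hne : (𝓝[Icc c b \ {c}] c).NeBot := pedAux_neBot_right hcb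
  have hsl : ∀ᶠ y in 𝓝[Icc c b \ {c}] c, 0 ≤ slope (fun x => f x - u x) c y := by
    filter_upwards [eventually_mem_nhdsWithin] with y hy
    have hyne : y ≠ c := by simpa using hy.2
    have hyc : c < y := lt_of_le_of_ne hy.1.1 (Ne.symm hyne)
    have h1 : 0 < f y - u y := hlt y hyc hy.1.2
    rw [slope_def_field]
    apply div_nonneg
    · rw [hφc0]; linarith
    · linarith
  have := ge_of_tendsto hd hsl
  linarith

/-- From a pointwise derivative bound, a difference bound. -/
lemma pedAux_diff_le {g gd : ℝ → ℝ} {a b C : ℝ} (h0 : 0 ≤ a) (hab : a ≤ b) (hb1 : b ≤ 1)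
    (hg : ∀ x ∈ Icc (0:ℝ) 1, HasDerivWithinAt g (gd x) (Icc (0:ℝ) 1) x)
    (hbound : ∀ x ∈ Icc a b, gd x ≤ C) :
    g b - g a ≤ C * (b - a) := by
  have hsub : Icc a b ⊆ Icc (0:ℝ) 1 := Icc_subset_Icc h0 hb1
  have hdiff : ∀ x ∈ Ioo a b, HasDerivAt (fun x => C * x - g x) (C - gd x) x := by
    intro x hx
    have hx01 : x ∈ Ioo (0:ℝ) 1 := ⟨lt_of_le_of_lt h0 hx.1, lt_of_lt_of_le hx.2 hb1⟩
    have hd : HasDerivAt g (gd x) x :=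
      (hg x (Ioo_subset_Icc_self hx01)).hasDerivAt (Icc_mem_nhds hx01.1 hx01.2)
    exact (((hasDerivAt_id' x).const_mul C).sub hd).congr_deriv (by ring)
  have hmono : MonotoneOn (fun x => C * x - g x) (Icc a b) := by
    apply monotoneOn_of_deriv_nonneg (convex_Icc a b)
    · exact ContinuousOn.sub (continuousOn_const.mul continuousOn_id)
        (ContinuousOn.mono (fun x hx => (hg x hx).continuousWithinAt) hsub)
    · intro x hx
      rw [interior_Icc] at hx
      exact (hdiff x hx).differentiableAt.differentiableWithinAt
    · intro x hx
      rw [interior_Icc] at hx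
      rw [(hdiff x hx).deriv]
      have := hbound x (Ioo_subset_Icc_self hx)
      linarith
  have h2 := hmono (left_mem_Icc.mpr hab) (right_mem_Icc.mpr hab) hab
  simp only [] at h2
  linarith


lemma pedAux_arith_b1 {η γ qx : ℝ} (hη0 : 0 < η) (hγ : 0 < γ) (hη2 : 4*η ≤ γ)
    (hql : γ ≤ qx) : η*γ/4 ≤ η*qx/2 - η^2/4 := by nlinarith

lemma pedAux_arith_b2 {η γ qx : ℝ} (hη0 : 0 < η) (hγ : 0 < γ) (hη2 : 4*η ≤ γ)
    (hql : γ ≤ qx) : η*γ ≤ 2*η*qx - 4*η^2 := by nlinarith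

lemma pedAux_arith_speed {s qx γ η : ℝ} (hη0 : 0 < η) (hγ : 0 < γ) (hη2 : 4*η ≤ γ)
    (hql : γ ≤ qx) (hs1 : η/2 < s) (hs2 : s < qx - η) : η*γ/4 ≤ s*(qx - s) := by
  rcases le_or_gt s (qx/2) with hcs | hcs
  · nlinarith
  · have hspos : (0:ℝ) ≤ s := le_of_lt (lt_trans (half_pos hη0) hs1)
    nlinarith [mul_le_mul_of_nonneg_left (show η ≤ qx - s by linarith) hspos,
      mul_le_mul_of_nonneg_right (show γ/2 ≤ s by linarith) hη0.le, mul_pos hη0 hγ]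

lemma pedAux_endgame {β δ η r Q : ℝ} (hβ0 : 0 < β) (hβ1 : β < 1/2) (hδ : 0 < δ)
    (hη0 : 0 < η) (hη2 : 4*η ≤ 1 - 2*β) (hη3 : 8*η ≤ δ)
    (hQsq : Q^2 = 1 - 4*(β*r)) (hQγ : 1 - 2*β ≤ Q) (hQ1 : Q ≤ 1)
    (hr1 : (1+Q)/2 - 2*η < r) (hrlt : r < 1) (hcon : r ≤ 1 - β - δ) : False := by
  set s := r - (1 - Q)/2 with hsdef
  have hkey : r * (1 - β - r) = s * (Q - s) := by
    simp only [hsdef]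
    linear_combination (-(1/4) : ℝ) * hQsq
  have hslb : Q - 2*η ≤ s := by simp only [hsdef]; linarith
  have hs1 : s ≤ (1 + Q)/2 := by simp only [hsdef]; linarith
  have hrhalf : 1/2 ≤ r := by linarith
  have hd5 : δ/2 ≤ r * (1 - β - r) := by
    nlinarith [mul_le_mul_of_nonneg_left (show δ ≤ 1 - β - r by linarith)
      (by linarith : (0:ℝ) ≤ r),
      mul_le_mul_of_nonneg_right hrhalf hδ.le]
  rcases le_or_gt (Q - s) 0 with hqs | hqs
  · nlinarith [mul_nonpos_of_nonneg_of_nonpos (show (0:ℝ) ≤ s by linarith) hqs]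
  · nlinarith [mul_le_mul_of_nonneg_right (show s ≤ 1 by linarith) hqs.le]

lemma pedAux_alpha {α η c R : ℝ} (hα1 : α ≤ 1) (hη0 : 0 < η) (hR : 1/2 ≤ R)
    (hc : c = R*(1-R)) (hαge : 1 - R + 2*η ≤ α) (hd2 : α*(R-η) < c) : False := by
  rw [hc] at hd2
  nlinarith [mul_nonneg (sub_nonneg.mpr hαge) (by linarith : (0:ℝ) ≤ R),
    mul_nonneg hη0.le (show (0:ℝ) ≤ 2*R - α by nlinarith)]

lemma pedAux_basic {ε α β J : ℝ} {k ρ ρd : ℝ → ℝ}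
    (hε : 0 < ε) (hα : 0 < α) (hβ0 : 0 < β) (hβ1 : β < 1)
    (hkpos : ∀ x ∈ Icc (0:ℝ) 1, 0 < k x)
    (sol : IsClassicalSolution 1 ε α β k ρ ρd J) :
    J = α * k 0 * (1 - ρ 0) ∧ J = β * k 1 * ρ 1 ∧ 0 < J ∧
      (∀ x ∈ Icc (0:ℝ) 1, 0 < ρ x) ∧ (∀ x ∈ Icc (0:ℝ) 1, ρ x < 1) ∧
      (∀ x ∈ Icc (0:ℝ) 1, ε * ρd x = ρ x * (1 - ρ x) - J / k x) := by
  have h0mem : (0:ℝ) ∈ Icc (0:ℝ) 1 := ⟨le_refl 0, zero_le_one⟩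
  have h1mem : (1:ℝ) ∈ Icc (0:ℝ) 1 := ⟨zero_le_one, le_refl 1⟩
  have hk0 : 0 < k 0 := hkpos 0 h0mem
  have hk1 : 0 < k 1 := hkpos 1 h1mem
  obtain ⟨hρder, hρdc, heq, hbc0, hbc1⟩ := sol
  have hJ0 : J = α * k 0 * (1 - ρ 0) := by
    have h := heq 0 h0mem
    rw [hbc0] at h
    linarith [h]
  have hJ1 : J = β * k 1 * ρ 1 := by
    have h := heq 1 h1mem
    rw [hbc1] at h
    linarith [h]
  have hρd : ∀ x ∈ Icc (0:ℝ) 1, ε * ρd x = ρ x * (1 - ρ x) - J / k x := by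
    intro x hx
    have h := heq x hx
    have hkx := (hkpos x hx).ne'
    field_simp
    linear_combination -h
  have hJpos : 0 < J := by
    by_contra hcon
    push_neg at hcon
    have hρ0 : 1 ≤ ρ 0 := by nlinarith [mul_pos hα hk0]
    have hρ1 : ρ 1 ≤ 0 := by nlinarith [mul_pos hβ0 hk1]
    have := pedAux_stay_above (zero_lt_one) (f := ρ) (u := fun _ => (1:ℝ)/2)
      (fd := ρd) (ud := fun _ => (0:ℝ)) hρder
      (fun x _ => hasDerivWithinAt_const x _ _)
      (by simpa using by linarith : (fun _ => (1:ℝ)/2) 0 < ρ 0)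
      (by
        intro x hx hc
        have h := hρd x hx
        rw [hc] at h
        have hJk : J / k x ≤ 0 := div_nonpos_of_nonpos_of_nonneg hcon (hkpos x hx).le
        have : (1:ℝ)/4 ≤ ε * ρd x := by rw [h]; norm_num; linarith
        have : 0 < ρd x := by nlinarith
        simpa using this) 1 h1mem
    simp at this
    linarith
  have hρ0lt : ρ 0 < 1 := by nlinarith [mul_pos hα hk0]
  have hρ1pos : 0 < ρ 1 := by nlinarith [mul_pos hβ0 hk1]
  have hρlt1 : ∀ x ∈ Icc (0:ℝ) 1, ρ x < 1 := by
    intro x hx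
    have := pedAux_stay_above (zero_lt_one) (f := fun x => -ρ x) (u := fun _ => (-1:ℝ))
      (fd := fun x => -ρd x) (ud := fun _ => (0:ℝ))
      (fun x hx => (hρder x hx).neg)
      (fun x _ => hasDerivWithinAt_const x _ _)
      (by simpa using hρ0lt)
      (by
        intro x hx hc
        simp only [neg_inj] at hc
        have hc' : ρ x = 1 := by linarith [hc]
        have h := hρd x hx
        rw [hc'] at h
        have hJk : 0 < J / k x := div_pos hJpos (hkpos x hx)
        have : ε * ρd x < 0 := by rw [h]; simpa using hJk
        have : ρd x < 0 := by nlinarith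
        simpa using this) x hx
    simpa using this
  have hρpos : ∀ x ∈ Icc (0:ℝ) 1, 0 < ρ x := by
    intro x hx
    have := pedAux_stay_above_rev (zero_lt_one) (f := ρ) (u := fun _ => (0:ℝ))
      (fd := ρd) (ud := fun _ => (0:ℝ)) hρder
      (fun x _ => hasDerivWithinAt_const x _ _)
      (by simpa using hρ1pos)
      (by
        intro x hx hc
        have h := hρd x hx
        rw [hc] at h
        have hJk : 0 < J / k x := div_pos hJpos (hkpos x hx)
        have : ε * ρd x < 0 := by rw [h]; simpa using hJk
        have : ρd x < 0 := by nlinarith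
        simpa using this) x hx
    simpa using this
  exact ⟨hJ0, hJ1, hJpos, hρpos, hρlt1, hρd⟩

set_option maxHeartbeats 1000000 in
lemma pedAux_caseI {β δ ℓ M ε J : ℝ} {k k' ρ ρd : ℝ → ℝ}
    (hβ0 : 0 < β) (hβ1 : β < 1/2) (hδ : 0 < δ) (hε : 0 < ε)
    (hk1 : 0 < k 1)
    (hklb : ∀ x ∈ Icc (0:ℝ) 1, k 1 ≤ k x)
    (hk : ∀ x ∈ Icc (0:ℝ) 1, HasDerivWithinAt k (k' x) (Icc 0 1) x)
    (hM : ∀ x ∈ Icc (0:ℝ) 1, |k' x| ≤ M)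
    (hρ : ∀ x ∈ Icc (0:ℝ) 1, HasDerivWithinAt ρ (ρd x) (Icc 0 1) x)
    (hρd : ∀ x ∈ Icc (0:ℝ) 1, ε * ρd x = ρ x * (1 - ρ x) - J / k x)
    (hJ1 : J = β * k 1 * ρ 1)
    (hρpos : ∀ x ∈ Icc (0:ℝ) 1, 0 < ρ x)
    (hρlt1 : ∀ x ∈ Icc (0:ℝ) 1, ρ x < 1)
    (hℓ0 : 0 < ℓ) (hℓ1 : ℓ ≤ 1/2) (hℓ2 : M * ℓ ≤ δ * k 1 / 4)
    (hεs : 8 * ε ≤ δ * ℓ) :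
    ρ 1 < 1 - β + δ := by
  by_contra hcon
  push_neg at hcon
  have h0mem : (0:ℝ) ∈ Icc (0:ℝ) 1 := ⟨le_refl 0, zero_le_one⟩
  have h1mem : (1:ℝ) ∈ Icc (0:ℝ) 1 := ⟨zero_le_one, le_refl 1⟩
  have hkpos : ∀ x ∈ Icc (0:ℝ) 1, 0 < k x := fun x hx => lt_of_lt_of_le hk1 (hklb x hx)
  have hr1half : (1:ℝ)/2 < ρ 1 := by linarith
  have hr1lt : ρ 1 < 1 := hρlt1 1 h1mem
  have hJpos : 0 < J := by nlinarith [hρpos 1 h1mem, mul_pos hβ0 hk1]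
  have hJle : J ≤ k 1 := by
    have : β * ρ 1 < 1 := by nlinarith
    nlinarith
  have hM0 : 0 ≤ M := le_trans (abs_nonneg _) (hM 0 h0mem)
  -- derivative of p = J / k
  have hpder : ∀ x ∈ Icc (0:ℝ) 1,
      HasDerivWithinAt (fun x => J / k x) (-(J * k' x) / (k x)^2) (Icc 0 1) x := by
    intro x hx
    have hd := (hasDerivWithinAt_const x (Icc (0:ℝ) 1) J).div (hk x hx) (hkpos x hx).ne'
    refine hd.congr_deriv ?_
    ring
  have hpbound : ∀ x ∈ Icc (0:ℝ) 1, -(J * k' x) / (k x)^2 ≤ M / k 1 := by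
    intro x hx
    have hkx := hkpos x hx
    have h1 : -(J * k' x) ≤ k 1 * M := by
      have := (abs_le.mp (hM x hx)).1
      nlinarith
    have h3 : (k 1)^2 ≤ (k x)^2 := by nlinarith [hklb x hx]
    calc -(J * k' x) / (k x)^2 ≤ (k 1 * M) / (k 1)^2 :=
            div_le_div₀ (by positivity) h1 (by positivity) h3
      _ = M / k 1 := by field_simp
  
  have hplow : ∀ x ∈ Icc (0:ℝ) 1, J / k 1 - (M / k 1) * (1 - x) ≤ J / k x := by
    intro x hx
    have h := pedAux_diff_le hx.1 hx.2 le_rfl hpder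
      (fun y hy => hpbound y ⟨le_trans hx.1 hy.1, hy.2⟩)
    linarith
  have hE : ε * ρd 1 = ρ 1 * (1 - ρ 1) - J / k 1 := hρd 1 h1mem
  have hJk1 : J / k 1 = β * ρ 1 := by rw [hJ1]; field_simp
  have hEneg : ε * ρd 1 ≤ -(δ/2) := by rw [hE, hJk1]; nlinarith
  have hstrip : ∀ x ∈ Icc (1-ℓ) 1, ρ 1 ≤ ρ x → ρd x ≤ -(δ/(4*ε)) := by
    intro x hx hge
    have hx01 : x ∈ Icc (0:ℝ) 1 := ⟨by linarith [hx.1], hx.2⟩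
    have h := hρd x hx01
    have hf : ρ x * (1 - ρ x) ≤ ρ 1 * (1 - ρ 1) := by nlinarith [hρlt1 x hx01]
    have hp := hplow x hx01
    have hMk : (M / k 1) * (1 - x) ≤ δ / 4 := by
      have h1x : 1 - x ≤ ℓ := by linarith [hx.1]
      have h2 : (M / k 1) * (1 - x) ≤ (M / k 1) * ℓ :=
        mul_le_mul_of_nonneg_left h1x (by positivity)
      have h3 : (M / k 1) * ℓ ≤ δ / 4 := by
        rw [div_mul_eq_mul_div, div_le_iff₀ hk1]; linarith
      linarith
    have h5 : ε * ρd x ≤ -(δ/4) := by linarith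
    have h6 : ρd x ≤ (-(δ/4))/ε := by
      rw [le_div_iff₀ hε]; linarith
    have h7 : (-(δ/4))/ε = -(δ/(4*ε)) := by ring
    linarith [h6, h7.le, h7.ge]
  have hρd1neg : ρd 1 < 0 := by nlinarith
  have hd1 := hρ 1 h1mem
  rw [hasDerivWithinAt_iff_tendsto_slope] at hd1
  have hne : (𝓝[Icc (0:ℝ) 1 \ {1}] (1:ℝ)).NeBot := pedAux_neBot_left zero_lt_one
  have hev1 : ∀ᶠ y in 𝓝[Icc (0:ℝ) 1 \ {1}] (1:ℝ), slope ρ 1 y < 0 :=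
    hd1.eventually_lt_const hρd1neg
  have hev2 : ∀ᶠ y in 𝓝[Icc (0:ℝ) 1 \ {1}] (1:ℝ), 1 - ℓ/2 < y :=
    eventually_nhdsWithin_of_eventually_nhds (eventually_gt_nhds (by linarith))
  obtain ⟨x₁, hsl, hx₁gt, hx₁mem⟩ := (hev1.and (hev2.and eventually_mem_nhdsWithin)).exists
  have hx₁lt : x₁ < 1 := lt_of_le_of_ne hx₁mem.1.2 (by simpa using hx₁mem.2)
  have hρx₁ : ρ 1 < ρ x₁ := by
    rw [slope_def_field] at hsl
    by_contra hle
    push_neg at hle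
    have : 0 ≤ (ρ x₁ - ρ 1)/(x₁ - 1) :=
      div_nonneg_of_nonpos (by linarith) (by linarith)
    linarith
  have hab : 1 - ℓ < x₁ := by linarith
  have hAneg : -(δ/(4*ε)) < 0 := by have : 0 < δ/(4*ε) := by positivity
                                    linarith
  have habove : ∀ x ∈ Icc (1-ℓ) x₁, ρ 1 < ρ x := by
    apply pedAux_stay_above_rev hab (fd := ρd) (ud := fun _ => (0:ℝ))
    · intro x hx
      exact (hρ x ⟨by linarith [hx.1], by linarith [hx.2, hx₁lt.le]⟩).mono
        (Icc_subset_Icc (by linarith) hx₁lt.le)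
    · intro x _
      exact hasDerivWithinAt_const _ _ _
    · exact hρx₁
    · intro x hx hcx
      have h8 : ρd x ≤ -(δ/(4*ε)) :=
        hstrip x ⟨hx.1, by linarith [hx.2, hx₁lt.le]⟩ (le_of_eq hcx.symm)
      linarith
  have hbnd : ∀ x ∈ Icc (1-ℓ) x₁, ρd x ≤ -(δ/(4*ε)) := fun x hx =>
    hstrip x ⟨hx.1, by linarith [hx.2, hx₁lt.le]⟩ (le_of_lt (habove x hx))
  have hint := pedAux_diff_le (by linarith : (0:ℝ) ≤ 1-ℓ) hab.le hx₁lt.le hρ hbnd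
  have hlen : ℓ/2 ≤ x₁ - (1-ℓ) := by linarith
  have hρ1ℓ : ρ (1-ℓ) < 1 := hρlt1 _ ⟨by linarith, by linarith⟩
  have hρx₁pos : 0 < ρ x₁ := hρpos _ ⟨by linarith, hx₁lt.le⟩
  have hA1 : 1 ≤ (δ/(4*ε)) * (ℓ/2) := by
    have he : (δ/(4*ε))*(ℓ/2) = (δ*ℓ)/(8*ε) := by ring
    rw [he, le_div_iff₀ (by positivity)]
    linarith
  nlinarith [mul_le_mul_of_nonneg_left hlen (show (0:ℝ) ≤ δ/(4*ε) by positivity)]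

set_option maxHeartbeats 1600000 in
lemma pedAux_caseII {α β δ η M ε J : ℝ} {k k' ρ ρd : ℝ → ℝ}
    (hβ0 : 0 < β) (hβ1 : β < 1/2) (hδ : 0 < δ) (hε : 0 < ε)
    (hα1 : α ≤ 1)
    (hk1 : 0 < k 1) (hk0 : 0 < k 0)
    (hklb : ∀ x ∈ Icc (0:ℝ) 1, k 1 ≤ k x)
    (hk : ∀ x ∈ Icc (0:ℝ) 1, HasDerivWithinAt k (k' x) (Icc 0 1) x)
    (hk'neg : ∀ x ∈ Icc (0:ℝ) 1, k' x < 0)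
    (hM : ∀ x ∈ Icc (0:ℝ) 1, |k' x| ≤ M)
    (hρ : ∀ x ∈ Icc (0:ℝ) 1, HasDerivWithinAt ρ (ρd x) (Icc 0 1) x)
    (hρd : ∀ x ∈ Icc (0:ℝ) 1, ε * ρd x = ρ x * (1 - ρ x) - J / k x)
    (hJ0 : J = α * k 0 * (1 - ρ 0))
    (hJ1 : J = β * k 1 * ρ 1)
    (hJpos : 0 < J)
    (hρpos : ∀ x ∈ Icc (0:ℝ) 1, 0 < ρ x)
    (hρlt1 : ∀ x ∈ Icc (0:ℝ) 1, ρ x < 1)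
    (hη0 : 0 < η)
    (hη1 : 2*η ≤ α - (1 - rhoStarLow β k))
    (hη2 : 4*η ≤ 1 - 2*β)
    (hη3 : 8*η ≤ δ)
    (hεs : 4 * ε * (M / (k 1 * (1 - 2*β)) + 1) ≤ η * (1 - 2*β)) :
    1 - β - δ < ρ 1 := by
  by_contra hcon
  push_neg at hcon
  have h0mem : (0:ℝ) ∈ Icc (0:ℝ) 1 := ⟨le_refl 0, zero_le_one⟩
  have h1mem : (1:ℝ) ∈ Icc (0:ℝ) 1 := ⟨zero_le_one, le_refl 1⟩
  have hkpos : ∀ x ∈ Icc (0:ℝ) 1, 0 < k x := fun x hx => lt_of_lt_of_le hk1 (hklb x hx)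
  set γ := 1 - 2*β with hγdef
  have hγ : 0 < γ := by simp only [hγdef]; linarith
  have hγ1 : γ ≤ 1 := by simp only [hγdef]; linarith
  have hγβ : γ = 1 - 2*β := hγdef
  clear_value γ
  have hr1pos : 0 < ρ 1 := hρpos 1 h1mem
  have hr1ub : ρ 1 ≤ 1 - β := by linarith
  have hM0 : 0 ≤ M := le_trans (abs_nonneg _) (hM 0 h0mem)
  have hJub : J ≤ β * (1-β) * k 1 := by nlinarith [mul_pos hβ0 hk1]
  have hJlek1 : J ≤ k 1 := by
    nlinarith [hJub, mul_nonneg (by nlinarith [sq_nonneg (1-2*β)] : (0:ℝ) ≤ 1/4 - β*(1-β)) hk1.le]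
  -- the functions p, A, q and their derivatives
  set pd := fun x => -(J * k' x) / (k x)^2 with hpddef
  set A := fun x => 1 - 4*(J / k x) with hAdef
  set q := fun x => Real.sqrt (A x) with hqdef
  have hpder : ∀ x ∈ Icc (0:ℝ) 1,
      HasDerivWithinAt (fun x => J / k x) (pd x) (Icc 0 1) x := by
    intro x hx
    have hd := (hasDerivWithinAt_const x (Icc (0:ℝ) 1) J).div (hk x hx) (hkpos x hx).ne'
    refine hd.congr_deriv ?_
    simp only [hpddef]; ring
  have hpdpos : ∀ x ∈ Icc (0:ℝ) 1, 0 < pd x := by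
    intro x hx
    have h5 := hk'neg x hx
    have h6 := hkpos x hx
    simp only [hpddef]
    apply div_pos (by nlinarith) (by positivity)
  have hpdub : ∀ x ∈ Icc (0:ℝ) 1, pd x ≤ M / k 1 := by
    intro x hx
    have hkx := hkpos x hx
    have h1 : -(J * k' x) ≤ k 1 * M := by
      have := (abs_le.mp (hM x hx)).1
      nlinarith
    have h3 : (k 1)^2 ≤ (k x)^2 := by nlinarith [hklb x hx]
    simp only [hpddef]
    calc -(J * k' x) / (k x)^2 ≤ (k 1 * M) / (k 1)^2 :=
          div_le_div₀ (by positivity) h1 (by positivity) h3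
      _ = M / k 1 := by field_simp
  have hJkub : ∀ x ∈ Icc (0:ℝ) 1, J / k x ≤ β * (1-β) := by
    intro x hx
    rw [div_le_iff₀ (hkpos x hx)]
    nlinarith [hklb x hx]
  have hAge : ∀ x ∈ Icc (0:ℝ) 1, γ^2 ≤ A x := by
    intro x hx
    have := hJkub x hx
    simp only [hAdef, hγdef]
    nlinarith
  have hApos : ∀ x ∈ Icc (0:ℝ) 1, 0 < A x := fun x hx => lt_of_lt_of_le (by positivity) (hAge x hx)
  have hAle1 : ∀ x ∈ Icc (0:ℝ) 1, A x ≤ 1 := by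
    intro x hx
    have : 0 < J / k x := div_pos hJpos (hkpos x hx)
    simp only [hAdef]; linarith
  have hqγ : ∀ x ∈ Icc (0:ℝ) 1, γ ≤ q x := by
    intro x hx
    have h := Real.sqrt_le_sqrt (hAge x hx)
    rwa [Real.sqrt_sq hγ.le] at h
  have hqpos : ∀ x ∈ Icc (0:ℝ) 1, 0 < q x := fun x hx => lt_of_lt_of_le hγ (hqγ x hx)
  have hq1 : ∀ x ∈ Icc (0:ℝ) 1, q x ≤ 1 := fun x hx => Real.sqrt_le_one.mpr (hAle1 x hx)
  have hqsq : ∀ x ∈ Icc (0:ℝ) 1, (q x)^2 = 1 - 4*(J / k x) :=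
    fun x hx => Real.sq_sqrt (hApos x hx).le
  set Ad := fun x => -(4 * pd x) with hAddef
  set qd := fun x => Ad x / (2 * q x) with hqddef
  have hqder : ∀ x ∈ Icc (0:ℝ) 1, HasDerivWithinAt q (qd x) (Icc 0 1) x := by
    intro x hx
    have hAder : HasDerivWithinAt A (Ad x) (Icc 0 1) x :=
      ((hpder x hx).const_mul 4).const_sub 1
    exact hAder.sqrt (hApos x hx).ne'
  have hqdneg : ∀ x ∈ Icc (0:ℝ) 1, qd x < 0 := by
    intro x hx
    have h1 := hpdpos x hx
    have h2 := hqpos x hx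
    simp only [hqddef, hAddef]
    apply div_neg_of_neg_of_pos (by linarith) (by linarith)
  have hb1d_eq : ∀ x ∈ Icc (0:ℝ) 1, -(qd x)/2 = pd x / q x := by
    intro x hx
    have h2 := (hqpos x hx).ne'
    simp only [hqddef, hAddef]
    field_simp
    ring
  have hb1d_ub : ∀ x ∈ Icc (0:ℝ) 1, -(qd x)/2 ≤ M / (k 1 * γ) := by
    intro x hx
    rw [hb1d_eq x hx]
    calc pd x / q x ≤ (M / k 1) / γ :=
          div_le_div₀ (by positivity) (hpdub x hx) hγ (hqγ x hx)
      _ = M / (k 1 * γ) := by rw [div_div]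
  -- the dichotomy at x = 0
  by_cases hdich : ρ 0 < (1 - q 0)/2 + η
  · -- contradiction with the size of α
    have hρstar_le1 : rhoStarLow β k ≤ 1 := by
      have h1 : Real.sqrt (1 - 4*β*(1-β) * k 1 / k 0) ≤ 1 := by
        rw [Real.sqrt_le_one]
        have : 0 ≤ 4*β*(1-β) * k 1 / k 0 := by
          apply div_nonneg _ hk0.le
          nlinarith
        linarith
      simp only [rhoStarLow]; linarith
    have hα0 : 0 < α := by linarith
    have hρ0eq : ρ 0 = 1 - (J / k 0) / α := by
      have h : α * k 0 * (1 - ρ 0) = J := hJ0.symm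
      field_simp
      nlinarith [h]
    have hqstar : Real.sqrt (1 - 4*β*(1-β) * k 1 / k 0) ≤ q 0 := by
      apply Real.sqrt_le_sqrt
      simp only [hAdef]
      have h1 : J / k 0 ≤ β * (1-β) * k 1 / k 0 := (div_le_div_iff_of_pos_right hk0).mpr hJub
      have h2 : 4*β*(1-β) * k 1 / k 0 = 4*(β*(1-β)*k 1/k 0) := by ring
      rw [h2]
      linarith
    set Q := q 0 with hQdef
    set R := (1 + Q)/2 with hRdef
    have hQ0 : 0 ≤ Q := (hqpos 0 h0mem).le
    have hR : 1/2 ≤ R := by simp only [hRdef]; linarith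
    have hc0 : J / k 0 = R * (1 - R) := by
      have := hqsq 0 h0mem
      simp only [hRdef]
      nlinarith [this]
    have hRstar : rhoStarLow β k ≤ R := by
      simp only [rhoStarLow, hRdef]
      linarith [hqstar]
    have hαge : 1 - R + 2*η ≤ α := by linarith [hRstar]
    -- from the dichotomy: J/k0 > α (R - η)
    have hd2 : α * (R - η) < J / k 0 := by
      have h1 : 1 - (J / k 0)/α < (1 - Q)/2 + η := by rw [← hρ0eq]; exact hdich
      have h2 : R - η < (J / k 0)/α := by simp only [hRdef] at *; linarith
      calc α * (R - η) < α * ((J / k 0)/α) := mul_lt_mul_of_pos_left h2 hα0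
        _ = J / k 0 := by field_simp
    exact pedAux_alpha hα1 hη0 hR hc0 hαge hd2
  · -- main branch
    push_neg at hdich
    set b₁ := fun x => (1 - q x)/2 + η/2 with hb₁def
    have hb₁der : ∀ x ∈ Icc (0:ℝ) 1, HasDerivWithinAt b₁ (-(qd x)/2) (Icc 0 1) x := by
      intro x hx
      exact (((hqder x hx).const_sub 1).div_const 2).add_const (η/2)
    have htrap1 : ∀ x ∈ Icc (0:ℝ) 1, b₁ x < ρ x := by
      apply pedAux_stay_above zero_lt_one hρ hb₁der
      · simp only [hb₁def]; linarith
      · intro x hx hcx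
        have h := hρd x hx
        rw [hcx] at h
        have hqs := hqsq x hx
        have hctct : ε * ρd x = η * q x / 2 - η^2/4 := by
          rw [h]; simp only [hb₁def]; linear_combination (-(1/4) : ℝ) * hqs
        have hlb : η * γ / 4 ≤ ε * ρd x := by
          rw [hctct]
          exact pedAux_arith_b1 hη0 hγ hη2 (hqγ x hx)
        have hC : M / (k 1 * γ) + 1 ≤ ρd x := by
          rw [← mul_le_mul_iff_right₀ hε]
          calc ε * (M / (k 1 * γ) + 1) ≤ η * γ / 4 := by
                simp only [hγdef] at *
                linarith [hεs]
            _ ≤ ε * ρd x := hlb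
        have := hb1d_ub x hx
        linarith
    by_cases hup : ∃ z ∈ Icc (0:ℝ) 1, (1 + q z)/2 - η ≤ ρ z
    · obtain ⟨z, hz, hzρ⟩ := hup
      set b₂ := fun x => (1 + q x)/2 - 2*η with hb₂def
      have hb₂der : ∀ x ∈ Icc (0:ℝ) 1, HasDerivWithinAt b₂ (qd x/2) (Icc 0 1) x := by
        intro x hx
        exact (((hqder x hx).const_add 1).div_const 2).sub_const (2*η)
      have hb2_1 : (1 + q 1)/2 - 2*η < ρ 1 := by
        rcases eq_or_lt_of_le hz.2 with hz1 | hz1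
        · rw [hz1] at hzρ
          linarith
        · have hres := pedAux_stay_above hz1 (f := ρ) (u := b₂) (fd := ρd) (ud := fun x => qd x/2)
            (fun x hx => (hρ x ⟨le_trans hz.1 hx.1, hx.2⟩).mono (Icc_subset_Icc hz.1 le_rfl))
            (fun x hx => (hb₂der x ⟨le_trans hz.1 hx.1, hx.2⟩).mono (Icc_subset_Icc hz.1 le_rfl))
            (by simp only [hb₂def]; linarith)
            (by
              intro x hx hcx
              have hx01 : x ∈ Icc (0:ℝ) 1 := ⟨le_trans hz.1 hx.1, hx.2⟩
              have h := hρd x hx01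
              rw [hcx] at h
              have hqs := hqsq x hx01
              have hctct : ε * ρd x = 2*η*(q x) - 4*η^2 := by
                rw [h]; simp only [hb₂def]; linear_combination (-(1/4) : ℝ) * hqs
              have hpos : 0 < ρd x := by
                have h20 := pedAux_arith_b2 hη0 hγ hη2 (hqγ x hx01)
                have h21 : 0 < η * γ := mul_pos hη0 hγ
                nlinarith [hctct]
              have := hqdneg x hx01
              linarith) 1 ⟨hz1.le, le_refl 1⟩
          simpa using hres
      have hQsq : (q 1)^2 = 1 - 4*(β*ρ 1) := by
        have h := hqsq 1 h1mem
        have hJk1 : J / k 1 = β * ρ 1 := by rw [hJ1]; field_simp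
        rw [hJk1] at h
        exact h
      exact pedAux_endgame hβ0 hβ1 hδ hη0 (by linarith : 4*η ≤ 1 - 2*β) hη3 hQsq
        (by linarith [hqγ 1 h1mem] : 1 - 2*β ≤ q 1) (hq1 1 h1mem)
        hb2_1 (hρlt1 1 h1mem) hcon
    · push_neg at hup
      have hspeed : ∀ x ∈ Icc (0:ℝ) 1, -ρd x ≤ -(η*γ/(4*ε)) := by
        intro x hx
        have h := hρd x hx
        have hqs := hqsq x hx
        set s := ρ x - (1 - q x)/2 with hsdef
        have hkey : ε * ρd x = s * (q x - s) := by
          rw [h]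
          simp only [hsdef]
          linear_combination (-(1/4) : ℝ) * hqs
        have hs1 : η/2 < s := by
          have h7 := htrap1 x hx
          simp only [hb₁def] at h7
          simp only [hsdef]
          linarith
        have hs2 : s < q x - η := by
          have h8 := hup x hx
          simp only [hsdef]
          linarith
        have hlow : η*γ/4 ≤ s * (q x - s) :=
          pedAux_arith_speed hη0 hγ hη2 (hqγ x hx) hs1 hs2
        have h10 : η*γ/4 ≤ ε * ρd x := by rw [hkey]; exact hlow
        have h9 : (η*γ/4)/ε ≤ ρd x := by
          rw [div_le_iff₀ hε]
          linarith
        have h11 : (η*γ/4)/ε = η*γ/(4*ε) := by ring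
        linarith
      have hdle := pedAux_diff_le (le_refl (0:ℝ)) zero_le_one le_rfl
        (g := fun x => -ρ x) (gd := fun x => -ρd x)
        (fun x hx => (hρ x hx).neg) hspeed
      have hC1 : 1 ≤ η*γ/(4*ε) := by
        rw [le_div_iff₀ (by positivity)]
        have h30 : (0:ℝ) ≤ ε * (M / (k 1 * γ)) :=
          mul_nonneg hε.le (by positivity)
        linarith [hεs]
      have h12 := hρlt1 1 h1mem
      have h13 := hρpos 0 h0mem
      norm_num at hdle
      linarith [hdle, hC1]

end PedAux

/-- Vanishing-viscosity limits of the flux and the boundary values in region G₅ ∪ G₆. -/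
theorem vanishing_viscosity_region56_boundary
    (α β : ℝ) (k k' : ℝ → ℝ) (ρ ρ' : ℝ → ℝ → ℝ) (J : ℝ → ℝ)
    (hk : ∀ x ∈ Icc (0:ℝ) 1, HasDerivWithinAt k (k' x) (Icc 0 1) x)
    (hk'c : ContinuousOn k' (Icc 0 1))
    (hkpos : ∀ x ∈ Icc (0:ℝ) 1, 0 < k x)
    (hk'neg : ∀ x ∈ Icc (0:ℝ) 1, k' x < 0)
    (hβ0 : 0 < β) (hβ1 : β < 1/2)
    (hα0 : 1 - rhoStarLow β k < α) (hα1 : α < 1) (hαne : α ≠ rhoStarLow β k)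
    (hsol : ∀ ε > 0, IsClassicalSolution 1 ε α β k (ρ ε) (ρ' ε) (J ε)) :
    Tendsto J (nhdsWithin 0 (Ioi 0)) (nhds (β * (1 - β) * k 1)) ∧
    Tendsto (fun ε => ρ ε 0) (nhdsWithin 0 (Ioi 0))
      (nhds (1 - β * (1 - β) * k 1 / (α * k 0))) ∧
    Tendsto (fun ε => ρ ε 1) (nhdsWithin 0 (Ioi 0)) (nhds (1 - β)) := by
  have h0mem : (0:ℝ) ∈ Icc (0:ℝ) 1 := ⟨le_refl 0, zero_le_one⟩
  have h1mem : (1:ℝ) ∈ Icc (0:ℝ) 1 := ⟨zero_le_one, le_refl 1⟩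
  have hk0 : 0 < k 0 := hkpos 0 h0mem
  have hk1 : 0 < k 1 := hkpos 1 h1mem
  have hkcont : ContinuousOn k (Icc 0 1) := fun x hx => (hk x hx).continuousWithinAt
  have hkanti : StrictAntiOn k (Icc (0:ℝ) 1) := by
    apply strictAntiOn_of_deriv_neg (convex_Icc 0 1) hkcont
    intro x hx
    rw [interior_Icc] at hx
    have hd : HasDerivAt k (k' x) x :=
      (hk x (Ioo_subset_Icc_self hx)).hasDerivAt (Icc_mem_nhds hx.1 hx.2)
    rw [hd.deriv]
    exact hk'neg x (Ioo_subset_Icc_self hx)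
  have hklb : ∀ x ∈ Icc (0:ℝ) 1, k 1 ≤ k x := by
    intro x hx
    rcases eq_or_lt_of_le hx.2 with h | h
    · rw [h]
    · exact (hkanti hx h1mem h).le
  obtain ⟨M, hMb⟩ := isCompact_Icc.exists_bound_of_continuousOn hk'c
  have hM : ∀ x ∈ Icc (0:ℝ) 1, |k' x| ≤ M := fun x hx => by
    simpa [Real.norm_eq_abs] using hMb x hx
  have hM0 : 0 ≤ M := le_trans (abs_nonneg _) (hM 0 h0mem)
  have hβ1' : β < 1 := by linarith
  have hρs1 : rhoStarLow β k ≤ 1 := by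
    have h1 : Real.sqrt (1 - 4*β*(1-β) * k 1 / k 0) ≤ 1 := by
      rw [Real.sqrt_le_one]
      have h2 : 0 ≤ 4*β*(1-β) * k 1 / k 0 := by
        apply div_nonneg _ hk0.le
        nlinarith [mul_pos (mul_pos hβ0 (by linarith : (0:ℝ) < 1 - β)) hk1]
      linarith
    simp only [rhoStarLow]
    linarith
  have hαpos : 0 < α := by linarith
  -- key quantitative bound on ρ ε 1
  have key : ∀ δ : ℝ, 0 < δ →
      ∃ ε₀, 0 < ε₀ ∧ ∀ ε : ℝ, 0 < ε → ε < ε₀ → |ρ ε 1 - (1 - β)| < δ := by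
    intro δ hδ
    have hapos : 0 < α - (1 - rhoStarLow β k) := by linarith
    set η := min (min ((α - (1 - rhoStarLow β k))/2) ((1-2*β)/4)) (δ/16) with hηdef
    have hη0 : 0 < η :=
      lt_min (lt_min (by linarith) (by linarith)) (by linarith)
    have hm1 : η ≤ (α - (1 - rhoStarLow β k))/2 :=
      le_trans (min_le_left _ _) (min_le_left _ _)
    have hm2 : η ≤ (1-2*β)/4 := le_trans (min_le_left _ _) (min_le_right _ _)
    have hm3 : η ≤ δ/16 := min_le_right _ _
    set ℓ := min (1/2) (δ * k 1/(4*(M+1))) with hℓdef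
    have hℓ0 : 0 < ℓ :=
      lt_min (by norm_num) (div_pos (by positivity) (by linarith))
    have hℓ1 : ℓ ≤ 1/2 := min_le_left _ _
    have hℓ2 : M * ℓ ≤ δ * k 1 / 4 := by
      have h1 : ℓ ≤ δ * k 1/(4*(M+1)) := min_le_right _ _
      have h2 : M * ℓ ≤ M * (δ * k 1/(4*(M+1))) := mul_le_mul_of_nonneg_left h1 hM0
      have h3 : M * (δ * k 1/(4*(M+1))) ≤ δ * k 1/4 := by
        have h4 : M * (δ * k 1/(4*(M+1))) = (M * (δ * k 1))/(4*(M+1)) := by ring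
        rw [h4, div_le_div_iff₀ (by linarith) (by norm_num)]
        nlinarith [mul_nonneg hδ.le hk1.le]
      linarith
    set ε₀ := min (δ*ℓ/9) (η*(1-2*β)/(4*(M / (k 1 * (1-2*β)) + 1))) with hε₀def
    have hCpos : 0 < M / (k 1 * (1-2*β)) + 1 := by
      have : 0 ≤ M / (k 1 * (1-2*β)) := div_nonneg hM0 (by nlinarith)
      linarith
    have hε₀pos : 0 < ε₀ :=
      lt_min (div_pos (mul_pos hδ hℓ0) (by norm_num))
        (div_pos (mul_pos hη0 (by linarith)) (by linarith))
    refine ⟨ε₀, hε₀pos, ?_⟩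
    intro ε hε hεlt
    have he1 : ε₀ ≤ δ*ℓ/9 := min_le_left _ _
    have he2 : ε₀ ≤ η*(1-2*β)/(4*(M / (k 1 * (1-2*β)) + 1)) := min_le_right _ _
    obtain ⟨hJ0', hJ1', hJpos', hρpos', hρlt1', hρd'⟩ :=
      pedAux_basic hε hαpos hβ0 hβ1' hkpos (hsol ε hε)
    have hεsI : 8*ε ≤ δ*ℓ := by
      have hδℓ : 0 < δ*ℓ := mul_pos hδ hℓ0
      linarith
    have hεsII : 4 * ε * (M / (k 1 * (1 - 2*β)) + 1) ≤ η * (1 - 2*β) := by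
      have h4 : ε < η*(1-2*β)/(4*(M / (k 1 * (1-2*β)) + 1)) := lt_of_lt_of_le hεlt he2
      have h5 := (lt_div_iff₀ (by linarith : (0:ℝ) < 4*(M / (k 1 * (1-2*β)) + 1))).mp h4
      nlinarith [h5]
    have hup := pedAux_caseI hβ0 hβ1 hδ hε hk1 hklb hk hM (hsol ε hε).1 hρd' hJ1'
      hρpos' hρlt1' hℓ0 hℓ1 hℓ2 hεsI
    have hlo := pedAux_caseII hβ0 hβ1 hδ hε hα1.le hk1 hk0 hklb hk hk'neg hM
      (hsol ε hε).1 hρd' hJ0' hJ1' hJpos' hρpos' hρlt1' hη0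
      (by linarith) (by linarith) (by linarith) hεsII
    rw [abs_lt]
    exact ⟨by linarith, by linarith⟩
  -- the limit of ρ ε 1
  have hρ1T : Tendsto (fun ε => ρ ε 1) (𝓝[Ioi (0:ℝ)] 0) (𝓝 (1 - β)) := by
    rw [Metric.tendsto_nhdsWithin_nhds]
    intro δ hδ
    obtain ⟨ε₀, hε₀, hkey⟩ := key δ hδ
    refine ⟨ε₀, hε₀, ?_⟩
    intro x hx hdist
    rw [Real.dist_eq, sub_zero] at hdist
    rw [Real.dist_eq]
    exact hkey x hx (lt_of_abs_lt hdist)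
  -- eventual identities
  have hBasic : ∀ᶠ ε in 𝓝[Ioi (0:ℝ)] 0,
      J ε = β * k 1 * ρ ε 1 ∧ ρ ε 0 = 1 - J ε / (α * k 0) := by
    filter_upwards [self_mem_nhdsWithin] with ε hε
    obtain ⟨hJ0', hJ1', _, _, _, _⟩ := pedAux_basic hε hαpos hβ0 hβ1' hkpos (hsol ε hε)
    refine ⟨hJ1', ?_⟩
    have h6 : J ε / (α * k 0) = 1 - ρ ε 0 := by
      rw [hJ0']
      field_simp
    linarith
  have hJT : Tendsto J (𝓝[Ioi (0:ℝ)] 0) (𝓝 (β * (1 - β) * k 1)) := by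
    have h1 : Tendsto (fun ε => β * k 1 * ρ ε 1) (𝓝[Ioi (0:ℝ)] 0) (𝓝 (β * k 1 * (1 - β))) :=
      hρ1T.const_mul (β * k 1)
    have h2 : (fun ε => β * k 1 * ρ ε 1) =ᶠ[𝓝[Ioi (0:ℝ)] 0] J := by
      filter_upwards [hBasic] with ε h
      exact h.1.symm
    have h4 : β * (1 - β) * k 1 = β * k 1 * (1 - β) := by ring
    rw [h4]
    exact h1.congr' h2
  have hρ0T : Tendsto (fun ε => ρ ε 0) (𝓝[Ioi (0:ℝ)] 0)
      (𝓝 (1 - β * (1 - β) * k 1 / (α * k 0))) := by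
    have h1 : Tendsto (fun ε => 1 - J ε / (α * k 0)) (𝓝[Ioi (0:ℝ)] 0)
        (𝓝 (1 - β * (1 - β) * k 1 / (α * k 0))) :=
      (hJT.div_const (α * k 0)).const_sub 1
    have h2 : (fun ε => 1 - J ε / (α * k 0)) =ᶠ[𝓝[Ioi (0:ℝ)] 0] (fun ε => ρ ε 0) := by
      filter_upwards [hBasic] with ε h
      exact h.2.symm
    exact h1.congr' h2
  exact ⟨hJT, hρ0T, hρ1T⟩
end

section
/- Let 0 < k₁ ≤ k₀ be real numbers and let α, β ∈ (0, 1/2] satisfy 4α(1−α)·k₀ ≤ k₁. Then α = 1 − (1/2)·(1 + √(1 − 4β(1−β)·k₁/k₀)) if and only if β = (1/2)·(1 − √(1 − 4α(1−α)·k₀/k₁)). -/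
open Set

lemma aux_curve (x c : ℝ) (hx0 : 0 < x) (hx : x ≤ 1/2) (hc : c ≤ 1) :
    x = (1/2) * (1 - Real.sqrt (1 - c)) ↔ c = 4*x*(1-x) := by
  constructor
  · intro h
    have hs : Real.sqrt (1 - c) = 1 - 2*x := by linarith
    have h2 := Real.sq_sqrt (by linarith : (0:ℝ) ≤ 1 - c)
    rw [hs] at h2
    nlinarith [h2]
  · intro h
    have h2 : (1:ℝ) - c = (1 - 2*x)^2 := by nlinarith
    rw [h2, Real.sqrt_sq (by linarith)]
    ring

/-- The boundary curves `α = 1 − ρ_*(β)` and `β = ρ*(α)` coincide: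
`α = 1 − (1/2)·(1 + √(1 − 4β(1−β)·k₁/k₀))` iff `β = (1/2)·(1 − √(1 − 4α(1−α)·k₀/k₁))`. -/
theorem boundary_curves_coincide
    (k₀ k₁ α β : ℝ) (hk₁ : 0 < k₁) (hk : k₁ ≤ k₀)
    (hα : α ∈ Ioc (0:ℝ) (1/2)) (hβ : β ∈ Ioc (0:ℝ) (1/2))
    (hle : 4*α*(1-α) * k₀ ≤ k₁) :
    α = 1 - (1/2) * (1 + Real.sqrt (1 - 4*β*(1-β) * k₁ / k₀)) ↔
      β = (1/2) * (1 - Real.sqrt (1 - 4*α*(1-α) * k₀ / k₁)) := by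
  have hk0 : 0 < k₀ := lt_of_lt_of_le hk₁ hk
  have hc₁ : 4*β*(1-β) * k₁ / k₀ ≤ 1 := by
    rw [div_le_one hk0]
    nlinarith [sq_nonneg (1 - 2*β), hβ.1, hβ.2]
  have hc₂ : 4*α*(1-α) * k₀ / k₁ ≤ 1 := by
    rw [div_le_one hk₁]; linarith
  have hrw : (1:ℝ) - (1/2) * (1 + Real.sqrt (1 - 4*β*(1-β) * k₁ / k₀)) =
      (1/2) * (1 - Real.sqrt (1 - 4*β*(1-β) * k₁ / k₀)) := by ring
  rw [hrw, aux_curve α _ hα.1 hα.2 hc₁, aux_curve β _ hβ.1 hβ.2 hc₂,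
    div_eq_iff hk0.ne', div_eq_iff hk₁.ne']
  constructor <;> intro h <;> linarith
end

section
/- Fix j ∈ (0, 1/4) and set ρ₋ = (1/2)·(1 − √(1 − 4j)) and ρ₊ = (1/2)·(1 + √(1 − 4j)). If v : [0,∞) → ℝ is differentiable and satisfies v'(t) = v(t)·(1 − v(t)) − j for all t ≥ 0 and v(0) > ρ₋, then v(t) → ρ₊ as t → ∞. -/
open Set Filter

/-- Gronwall: a function with `|f'| ≤ K|f|` and `f 0 = 0` vanishes on `[0,T]`. -/
lemma layer_gronwall_zero {f f' : ℝ → ℝ} {T K : ℝ}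
    (hf : ContinuousOn f (Icc 0 T))
    (hf' : ∀ x ∈ Ico 0 T, HasDerivWithinAt f (f' x) (Ici x) x)
    (h0 : f 0 = 0)
    (bound : ∀ x ∈ Ico 0 T, |f' x| ≤ K * |f x|) (hT : 0 ≤ T) :
    f T = 0 := by
  have h := norm_le_gronwallBound_of_norm_deriv_right_le (δ := 0) (K := K) (ε := 0)
    hf hf' (by simp [h0]) (fun x hx => by
      simpa [Real.norm_eq_abs] using bound x hx) T (right_mem_Icc.2 hT)
  rw [gronwallBound_ε0_δ0] at h
  simpa [Real.norm_eq_abs, abs_nonpos_iff] using h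

/-- Backward uniqueness / barrier: if `|v'| ≤ K |v - c|` on `[0,T]` and `v T = c`
then `v 0 = c`. -/
lemma layer_backward {v v' : ℝ → ℝ} {c T K : ℝ} (hT : 0 ≤ T)
    (hv : ∀ t, 0 ≤ t → HasDerivWithinAt v (v' t) (Ici 0) t)
    (hbound : ∀ t ∈ Icc 0 T, |v' t| ≤ K * |v t - c|)
    (hend : v T = c) : v 0 = c := by
  have hcont : ContinuousOn v (Ici 0) := fun t ht => (hv t ht).continuousWithinAt
  set f : ℝ → ℝ := fun s => v (T - s) - c with hf_def
  have hfc : ContinuousOn f (Icc 0 T) := by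
    apply ContinuousOn.sub _ continuousOn_const
    exact hcont.comp (continuousOn_const.sub continuousOn_id)
      (fun s hs => sub_nonneg.2 hs.2)
  have hf' : ∀ x ∈ Ico 0 T, HasDerivWithinAt f (-(v' (T - x))) (Ici x) x := by
    intro x hx
    have hTx : 0 < T - x := by linarith [hx.2]
    have hda : HasDerivAt v (v' (T - x)) (T - x) :=
      (hv (T - x) hTx.le).hasDerivAt (Ici_mem_nhds hTx)
    have hinner : HasDerivAt (fun s : ℝ => T - s) (-1) x := by
      simpa using (hasDerivAt_id x).const_sub T
    have := (hda.comp x hinner).sub_const c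
    simpa [hf_def, mul_comm] using this.hasDerivWithinAt
  have hzero : f T = 0 := by
    apply layer_gronwall_zero (K := K) hfc hf' (by simp [hf_def, hend]) (fun x hx => ?_) hT
    have hTx : T - x ∈ Icc 0 T := ⟨by linarith [hx.2], by linarith [hx.1]⟩
    simpa [hf_def, abs_neg] using hbound (T - x) hTx
  have : v 0 - c = 0 := by simpa [hf_def] using hzero
  linarith

/-- Forward uniqueness: if `|v'| ≤ K |v - c|` on `[0,T]` and `v 0 = c` then `v T = c`. -/
lemma layer_forward {v v' : ℝ → ℝ} {c T K : ℝ} (hT : 0 ≤ T)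
    (hv : ∀ t, 0 ≤ t → HasDerivWithinAt v (v' t) (Ici 0) t)
    (hbound : ∀ t ∈ Icc 0 T, |v' t| ≤ K * |v t - c|)
    (hstart : v 0 = c) : v T = c := by
  have hcont : ContinuousOn v (Ici 0) := fun t ht => (hv t ht).continuousWithinAt
  have hzero : (fun s => v s - c) T = 0 := by
    apply layer_gronwall_zero (f' := fun s => v' s)
      ((hcont.mono (Icc_subset_Ici_self)).sub continuousOn_const)
      (fun x hx => ((hv x hx.1).mono (Ici_subset_Ici.2 hx.1)).sub_const c)
      (by simp [hstart]) (fun x hx => hbound x (Ico_subset_Icc_self hx)) hT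
  have : v T - c = 0 := by simpa using hzero
  linarith

/-- For the layer problem `v' = v(1−v) − j` with `0 < j < 1/4`, every solution starting
above the repelling equilibrium `ρ₋ = (1/2)(1 − √(1−4j))` converges to the attracting
equilibrium `ρ₊ = (1/2)(1 + √(1−4j))` as `t → ∞`. -/
theorem layer_problem_convergence
    (j : ℝ) (hj : j ∈ Ioo (0:ℝ) (1/4)) (v v' : ℝ → ℝ)
    (hv : ∀ t, 0 ≤ t → HasDerivWithinAt v (v' t) (Ici 0) t)
    (heq : ∀ t, 0 ≤ t → v' t = v t * (1 - v t) - j)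
    (h0 : (1/2) * (1 - Real.sqrt (1 - 4*j)) < v 0) :
    Tendsto v atTop (nhds ((1/2) * (1 + Real.sqrt (1 - 4*j)))) := by
  obtain ⟨hj0, hj4⟩ := hj
  set r : ℝ := Real.sqrt (1 - 4*j) with hr_def
  set a : ℝ := (1/2) * (1 - r) with ha_def
  set b : ℝ := (1/2) * (1 + r) with hb_def
  have h4j : (0:ℝ) < 1 - 4*j := by linarith
  have hr2 : r^2 = 1 - 4*j := Real.sq_sqrt h4j.le
  have hr0 : 0 < r := Real.sqrt_pos.2 h4j
  have hab : a < b := by rw [ha_def, hb_def]; linarith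
  have hkey : ∀ x : ℝ, x * (1 - x) - j = -((x - a) * (x - b)) := by
    intro x
    rw [ha_def, hb_def]
    linear_combination (-(1:ℝ)/4) * hr2
  have heq' : ∀ t, 0 ≤ t → v' t = -((v t - a) * (v t - b)) := fun t ht => by
    rw [heq t ht, hkey]
  have hcont : ContinuousOn v (Ici 0) := fun t ht => (hv t ht).continuousWithinAt
  -- bounds on compact intervals
  have hK : ∀ T : ℝ, 0 ≤ T → ∃ K : ℝ,
      (∀ t ∈ Icc 0 T, |v t - a| ≤ K) ∧ (∀ t ∈ Icc 0 T, |v t - b| ≤ K) := by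
    intro T hT
    obtain ⟨C, hC⟩ := (isCompact_Icc (a := (0:ℝ)) (b := T)).exists_bound_of_continuousOn
      (hcont.mono Icc_subset_Ici_self)
    refine ⟨C + |a| + |b|, fun t ht => ?_, fun t ht => ?_⟩
    · have := hC t ht
      have h1 : |v t - a| ≤ |v t| + |a| := abs_sub _ _
      have h2 : (0:ℝ) ≤ |b| := abs_nonneg _
      simp only [Real.norm_eq_abs] at this
      linarith
    · have := hC t ht
      have h1 : |v t - b| ≤ |v t| + |b| := abs_sub _ _
      have h2 : (0:ℝ) ≤ |a| := abs_nonneg _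
      simp only [Real.norm_eq_abs] at this
      linarith
  -- v never touches a
  have hne_a : ∀ T, 0 ≤ T → v T ≠ a := by
    intro T hT hTa
    obtain ⟨K, hKa, hKb⟩ := hK T hT
    have : v 0 = a := by
      apply layer_backward (K := K) hT hv (fun t ht => ?_) hTa
      rw [heq' t ht.1, abs_neg, abs_mul, mul_comm]
      exact mul_le_mul_of_nonneg_right (hKb t ht) (abs_nonneg _)
    rw [this] at h0; exact absurd h0 (lt_irrefl a)
  -- v never touches b unless it starts there
  have hne_b : v 0 ≠ b → ∀ T, 0 ≤ T → v T ≠ b := by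
    intro h0b T hT hTb
    obtain ⟨K, hKa, hKb⟩ := hK T hT
    apply h0b
    apply layer_backward (K := K) hT hv (fun t ht => ?_) hTb
    rw [heq' t ht.1, abs_neg, abs_mul]
    exact mul_le_mul_of_nonneg_right (hKa t ht) (abs_nonneg _)
  -- v stays above a
  have hgt_a : ∀ T, 0 ≤ T → a < v T := by
    intro T hT
    rcases lt_or_ge a (v T) with h | h
    · exact h
    have : a ∈ v '' Icc 0 T := by
      apply intermediate_value_Icc' hT (hcont.mono Icc_subset_Ici_self)
      exact ⟨h, h0.le⟩
    obtain ⟨s, hs, hsa⟩ := this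
    exact absurd hsa (hne_a s hs.1)
  rcases eq_or_ne (v 0) b with h0b | h0b
  · -- starts at b: stays at b
    have hvb : ∀ T, 0 ≤ T → v T = b := by
      intro T hT
      obtain ⟨K, hKa, hKb⟩ := hK T hT
      apply layer_forward (K := K) hT hv (fun t ht => ?_) h0b
      rw [heq' t ht.1, abs_neg, abs_mul]
      exact mul_le_mul_of_nonneg_right (hKa t ht) (abs_nonneg _)
    exact tendsto_const_nhds.congr'
      ((eventually_ge_atTop 0).mono fun t ht => (hvb t ht).symm)
  rcases lt_or_gt_of_ne h0b with h0lt | h0gt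
  · -- a < v 0 < b : monotone increasing towards b
    have hlt_b : ∀ T, 0 ≤ T → v T < b := by
      intro T hT
      rcases lt_or_ge (v T) b with h | h
      · exact h
      have hne := hne_b h0b
      have : b ∈ v '' Icc 0 T := by
        apply intermediate_value_Icc hT (hcont.mono Icc_subset_Ici_self)
        exact ⟨h0lt.le, h⟩
      obtain ⟨s, hs, hsb⟩ := this
      exact absurd hsb (hne s hs.1)
    have hdiff : ∀ x ∈ interior (Ici (0:ℝ)), HasDerivAt v (v' x) x := by
      rw [interior_Ici]
      exact fun x hx => (hv x hx.le).hasDerivAt (Ici_mem_nhds hx)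
    have hderiv : ∀ x ∈ interior (Ici (0:ℝ)), deriv v x = v' x :=
      fun x hx => (hdiff x hx).deriv
    have hdOn : DifferentiableOn ℝ v (interior (Ici 0)) :=
      fun x hx => (hdiff x hx).differentiableAt.differentiableWithinAt
    have hmono : MonotoneOn v (Ici 0) := by
      apply monotoneOn_of_deriv_nonneg (convex_Ici 0) hcont hdOn
      intro x hx
      rw [hderiv x hx]
      rw [interior_Ici] at hx
      rw [heq' x hx.le]
      have h1 := hgt_a x hx.le
      have h2 := hlt_b x hx.le
      nlinarith
    set u : ℝ → ℝ := fun t => v (max t 0) with hu_def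
    have humono : Monotone u := fun s t hst =>
      hmono (le_max_right s 0) (le_max_right t 0) (max_le_max hst le_rfl)
    have hub : ∀ t, u t ≤ b := fun t => (hlt_b _ (le_max_right t 0)).le
    have hbdd : BddAbove (range u) := ⟨b, fun y ⟨t, ht⟩ => ht ▸ hub t⟩
    have htend : Tendsto u atTop (nhds (⨆ t, u t)) := tendsto_atTop_ciSup humono hbdd
    have hL : (⨆ t, u t) = b := by
      set L := ⨆ t, u t with hL_def
      have hLb : L ≤ b := ciSup_le hub
      rcases eq_or_lt_of_le hLb with h | hLlt
      · exact h
      exfalso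
      have huL : ∀ t, u t ≤ L := fun t => le_ciSup hbdd t
      have hv0 : ∀ t, 0 ≤ t → v 0 ≤ v t := fun t ht => hmono self_mem_Ici ht ht
      set c : ℝ := (v 0 - a) * (b - L) with hc_def
      have hc0 : 0 < c := mul_pos (by linarith) (by linarith)
      have hder_ge : ∀ x ∈ interior (Ici (0:ℝ)), c ≤ deriv v x := by
        intro x hx
        rw [hderiv x hx]
        rw [interior_Ici] at hx
        rw [heq' x hx.le]
        have h1 := hgt_a x hx.le
        have h2 := hlt_b x hx.le
        have h3 := hv0 x hx.le
        have h4 : v x ≤ L := by simpa [hu_def, max_eq_left (show (0:ℝ) ≤ x from hx.le)] using huL x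
        nlinarith
      have hgrow : ∀ T, 0 ≤ T → c * T ≤ v T - v 0 := by
        intro T hT
        have := (convex_Ici (0:ℝ)).mul_sub_le_image_sub_of_le_deriv hcont hdOn
          hder_ge 0 self_mem_Ici T hT hT
        simpa using this
      set T : ℝ := (b - v 0) / c + 1 with hT_def
      have hT0 : 0 ≤ T := by
        have h : 0 ≤ (b - v 0) / c := div_nonneg (by linarith) hc0.le
        rw [hT_def]; linarith
      have h1 := hgrow T hT0
      have h2 := hlt_b T hT0
      have h3 : c * T = (b - v 0) + c := by
        rw [hT_def]; field_simp
      nlinarith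
    rw [hb_def] at hL
    refine (hL ▸ htend).congr'
      ((eventually_ge_atTop 0).mono fun t ht => ?_)
    rw [hu_def]; simp [max_eq_left ht]
  · -- v 0 > b : monotone decreasing towards b
    have hgt_b : ∀ T, 0 ≤ T → b < v T := by
      intro T hT
      rcases lt_or_ge b (v T) with h | h
      · exact h
      have hne := hne_b h0b
      have : b ∈ v '' Icc 0 T := by
        apply intermediate_value_Icc' hT (hcont.mono Icc_subset_Ici_self)
        exact ⟨h, h0gt.le⟩
      obtain ⟨s, hs, hsb⟩ := this
      exact absurd hsb (hne s hs.1)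
    have hdiff : ∀ x ∈ interior (Ici (0:ℝ)), HasDerivAt v (v' x) x := by
      rw [interior_Ici]
      exact fun x hx => (hv x hx.le).hasDerivAt (Ici_mem_nhds hx)
    have hderiv : ∀ x ∈ interior (Ici (0:ℝ)), deriv v x = v' x :=
      fun x hx => (hdiff x hx).deriv
    have hdOn : DifferentiableOn ℝ v (interior (Ici 0)) :=
      fun x hx => (hdiff x hx).differentiableAt.differentiableWithinAt
    have hanti : AntitoneOn v (Ici 0) := by
      apply antitoneOn_of_deriv_nonpos (convex_Ici 0) hcont hdOn
      intro x hx
      rw [hderiv x hx]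
      rw [interior_Ici] at hx
      rw [heq' x hx.le]
      have h1 := hgt_a x hx.le
      have h2 := hgt_b x hx.le
      nlinarith
    set u : ℝ → ℝ := fun t => v (max t 0) with hu_def
    have huanti : Antitone u := fun s t hst =>
      hanti (le_max_right s 0) (le_max_right t 0) (max_le_max hst le_rfl)
    have hub : ∀ t, b ≤ u t := fun t => (hgt_b _ (le_max_right t 0)).le
    have hbdd : BddBelow (range u) := ⟨b, fun y ⟨t, ht⟩ => ht ▸ hub t⟩
    have htend : Tendsto u atTop (nhds (⨅ t, u t)) := tendsto_atTop_ciInf huanti hbdd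
    have hL : (⨅ t, u t) = b := by
      set L := ⨅ t, u t with hL_def
      have hLb : b ≤ L := le_ciInf hub
      rcases eq_or_lt_of_le hLb with h | hLlt
      · exact h.symm
      exfalso
      have huL : ∀ t, L ≤ u t := fun t => ciInf_le hbdd t
      set c : ℝ := (L - a) * (L - b) with hc_def
      have hc0 : 0 < c := mul_pos (by linarith) (by linarith)
      have hder_le : ∀ x ∈ interior (Ici (0:ℝ)), deriv v x ≤ -c := by
        intro x hx
        rw [hderiv x hx]
        rw [interior_Ici] at hx
        rw [heq' x hx.le]
        have h1 := hgt_a x hx.le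
        have h2 := hgt_b x hx.le
        have h4 : L ≤ v x := by simpa [hu_def, max_eq_left (show (0:ℝ) ≤ x from hx.le)] using huL x
        nlinarith
      have hdecay : ∀ T, 0 ≤ T → v T - v 0 ≤ -c * T := by
        intro T hT
        have := (convex_Ici (0:ℝ)).image_sub_le_mul_sub_of_deriv_le hcont hdOn
          hder_le 0 self_mem_Ici T hT hT
        simpa using this
      set T : ℝ := (v 0 - b) / c + 1 with hT_def
      have hT0 : 0 ≤ T := by
        have h : 0 ≤ (v 0 - b) / c := div_nonneg (by linarith) hc0.le
        rw [hT_def]; linarith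
      have h1 := hdecay T hT0
      have h2 := hgt_b T hT0
      have h3 : c * T = (v 0 - b) + c := by
        rw [hT_def]; field_simp
      nlinarith
    rw [hb_def] at hL
    refine (hL ▸ htend).congr'
      ((eventually_ge_atTop 0).mono fun t ht => ?_)
    rw [hu_def]; simp [max_eq_left ht]
end

section
/- Let a < b be real numbers, ε > 0, J > 1/4, and set c = √(J − 1/4). If ρ : [a,b] → ℝ is differentiable and satisfies ε·ρ'(x) = ρ(x)·(1 − ρ(x)) − J for all x ∈ [a,b], then there exists ξ ∈ ℝ such that c·(x − ξ)/ε ∈ (−π/2, π/2) and ρ(x) = 1/2 − c·tan(c·(x − ξ)/ε) for every x ∈ [a,b]. -/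
open Set

/-- For flux `J > 1/4`, every solution of `ε·ρ' = ρ(1−ρ) − J` on `[a,b]` is a tangent
profile: `ρ(x) = 1/2 − c·tan(c·(x−ξ)/ε)` with `c = √(J − 1/4)` for some shift `ξ`. -/
theorem tan_profile
    (a b ε J : ℝ) (hab : a < b) (hε : 0 < ε) (hJ : 1/4 < J)
    (ρ ρ' : ℝ → ℝ)
    (hρ : ∀ x ∈ Icc a b, HasDerivWithinAt ρ (ρ' x) (Icc a b) x)
    (heq : ∀ x ∈ Icc a b, ε * ρ' x = ρ x * (1 - ρ x) - J) :
    ∃ ξ : ℝ, ∀ x ∈ Icc a b,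
      Real.sqrt (J - 1/4) * (x - ξ) / ε ∈ Ioo (-(Real.pi/2)) (Real.pi/2) ∧
      ρ x = 1/2 - Real.sqrt (J - 1/4) *
        Real.tan (Real.sqrt (J - 1/4) * (x - ξ) / ε) := by
  have hJ4 : (0:ℝ) < J - 1/4 := by linarith
  set c := Real.sqrt (J - 1/4) with hcdef
  have hc : 0 < c := Real.sqrt_pos.mpr hJ4
  have hc2 : c^2 = J - 1/4 := Real.sq_sqrt hJ4.le
  have hJ' : J = c^2 + 1/4 := by linarith
  set g : ℝ → ℝ := fun x => Real.arctan ((1/2 - ρ x)/c) - (c/ε) * x with hgdef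
  have hgd : ∀ x ∈ Icc a b, HasDerivWithinAt g 0 (Icc a b) x := by
    intro x hx
    have hu : HasDerivWithinAt (fun y => (1/2 - ρ y)/c) (-ρ' x / c) (Icc a b) x :=
      ((hρ x hx).const_sub (1/2)).div_const c
    have harc := (Real.hasDerivAt_arctan ((1/2 - ρ x)/c)).comp_hasDerivWithinAt x hu
    have hlin : HasDerivWithinAt (fun y => (c/ε) * y) (c/ε) (Icc a b) x := by
      simpa using ((hasDerivAt_id x).const_mul (c/ε)).hasDerivWithinAt
    have hkey : (1 / (1 + ((1/2 - ρ x)/c)^2)) * (-ρ' x / c) = c/ε := by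
      have he := heq x hx
      have h1 : ρ' x = (ρ x * (1 - ρ x) - J)/ε := by
        rw [eq_div_iff hε.ne']; linarith
      have hden : (1:ℝ) + ((1/2 - ρ x)/c)^2 ≠ 0 := by positivity
      rw [h1, hJ']
      field_simp
      ring
    have h0 : (1 / (1 + ((1/2 - ρ x)/c)^2)) * (-ρ' x / c) - c/ε = 0 := by
      rw [hkey]; ring
    have h2 := harc.sub hlin
    rw [h0] at h2
    exact h2
  have hgdiff : DifferentiableOn ℝ g (Icc a b) := fun x hx => (hgd x hx).differentiableWithinAt
  have hud : UniqueDiffOn ℝ (Icc a b) := uniqueDiffOn_Icc hab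
  have hconst : ∀ x ∈ Icc a b, g x = g a := by
    apply constant_of_derivWithin_zero hgdiff
    intro x hx
    exact (hgd x (Ico_subset_Icc_self hx)).derivWithin (hud x (Ico_subset_Icc_self hx))
  refine ⟨a - ε * Real.arctan ((1/2 - ρ a)/c) / c, ?_⟩
  intro x hx
  have h := hconst x hx
  simp only [hgdef] at h
  set Aa := Real.arctan ((1/2 - ρ a)/c) with hAa
  set Ax := Real.arctan ((1/2 - ρ x)/c) with hAx
  have h' : Ax * ε = Aa * ε + c * x - c * a := by
    field_simp at h; linarith
  have hcx : c * (x - (a - ε * Aa / c)) / ε = Ax := by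
    field_simp
    linear_combination -h'
  rw [hcx]
  refine ⟨⟨Real.neg_pi_div_two_lt_arctan _, Real.arctan_lt_pi_div_two _⟩, ?_⟩
  rw [hAx, Real.tan_arctan]
  field_simp
  ring
end

section
/- Let a < b be real numbers, ε > 0, 0 ≤ J < 1/4, and set c = √(1/4 − J). If ρ : [a,b] → ℝ is differentiable and satisfies ε·ρ'(x) = ρ(x)·(1 − ρ(x)) − J for all x ∈ [a,b], and moreover 1/2 − c < ρ(x) < 1/2 + c for all x ∈ [a,b], then there exists ξ ∈ ℝ such that ρ(x) = 1/2 + c·tanh(c·(x − ξ)/ε) for every x ∈ [a,b]. -/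
open Set

lemma tanh_half_log {v : ℝ} (h1 : -1 < v) (h2 : v < 1) :
    Real.tanh (Real.log ((1 + v) / (1 - v)) / 2) = v := by
  have hv1 : 0 < 1 + v := by linarith
  have hv2 : 0 < 1 - v := by linarith
  set y := Real.log ((1 + v) / (1 - v)) / 2 with hy
  have hexp : Real.exp y * Real.exp y = (1 + v) / (1 - v) := by
    rw [← Real.exp_add, show y + y = Real.log ((1 + v) / (1 - v)) by rw [hy]; ring,
      Real.exp_log (div_pos hv1 hv2)]
  have hE : 0 < Real.exp y := Real.exp_pos y
  rw [Real.tanh_eq_sinh_div_cosh, Real.sinh_eq, Real.cosh_eq, Real.exp_neg]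
  rw [div_eq_iff (by positivity)]
  have h : Real.exp y * Real.exp y * (1 - v) = 1 + v := by
    field_simp at hexp; linarith [hexp]
  field_simp
  nlinarith [h, hE]

/-- For flux `0 ≤ J < 1/4`, every solution of `ε·ρ' = ρ(1−ρ) − J` on `[a,b]` taking values
strictly between the two equilibria `1/2 ± c`, `c = √(1/4 − J)`, is a hyperbolic tangent
profile: `ρ(x) = 1/2 + c·tanh(c·(x−ξ)/ε)` for some shift `ξ`. -/
theorem tanh_profile
    (a b ε J : ℝ) (hab : a < b) (hε : 0 < ε) (hJ0 : 0 ≤ J) (hJ : J < 1/4)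
    (ρ ρ' : ℝ → ℝ)
    (hρ : ∀ x ∈ Icc a b, HasDerivWithinAt ρ (ρ' x) (Icc a b) x)
    (heq : ∀ x ∈ Icc a b, ε * ρ' x = ρ x * (1 - ρ x) - J)
    (hbound : ∀ x ∈ Icc a b,
      1/2 - Real.sqrt (1/4 - J) < ρ x ∧ ρ x < 1/2 + Real.sqrt (1/4 - J)) :
    ∃ ξ : ℝ, ∀ x ∈ Icc a b,
      ρ x = 1/2 + Real.sqrt (1/4 - J) *
        Real.tanh (Real.sqrt (1/4 - J) * (x - ξ) / ε) := by
  set c := Real.sqrt (1/4 - J) with hc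
  have hc2 : c ^ 2 = 1/4 - J := Real.sq_sqrt (by linarith)
  have hcpos : 0 < c := Real.sqrt_pos.mpr (by linarith)
  -- v x = (ρ x - 1/2)/c ∈ (-1, 1)
  set v : ℝ → ℝ := fun x => (ρ x - 1/2) / c with hv
  have hvmem : ∀ x ∈ Icc a b, -1 < v x ∧ v x < 1 := by
    intro x hx
    obtain ⟨h1, h2⟩ := hbound x hx
    constructor
    · rw [hv]; rw [lt_div_iff₀ hcpos]; linarith
    · rw [hv]; rw [div_lt_iff₀ hcpos]; linarith
  -- u x = (log (1+v) - log (1-v))/2, g x = u x - c*x/ε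
  set u : ℝ → ℝ := fun x => (Real.log (1 + v x) - Real.log (1 - v x)) / 2 with hu
  set g : ℝ → ℝ := fun x => u x - c * x / ε with hg
  have hgderiv : ∀ x ∈ Icc a b, HasDerivWithinAt g 0 (Icc a b) x := by
    intro x hx
    obtain ⟨hb1, hb2⟩ := hvmem x hx
    have hp1 : 0 < 1 + v x := by linarith
    have hp2 : 0 < 1 - v x := by linarith
    have hdv : HasDerivWithinAt v (ρ' x / c) (Icc a b) x :=
      ((hρ x hx).sub_const _).div_const c
    have hd1 : HasDerivWithinAt (fun y => 1 + v y) (ρ' x / c) (Icc a b) x := by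
      exact hdv.const_add 1
    have hd2 : HasDerivWithinAt (fun y => 1 - v y) (-(ρ' x / c)) (Icc a b) x := by
      exact hdv.const_sub 1
    have h1 : HasDerivWithinAt (fun y => Real.log (1 + v y))
        ((1 + v x)⁻¹ * (ρ' x / c)) (Icc a b) x :=
      by have := (Real.hasDerivAt_log hp1.ne').comp_hasDerivWithinAt x hd1; exact this
    have h2 : HasDerivWithinAt (fun y => Real.log (1 - v y))
        ((1 - v x)⁻¹ * (-(ρ' x / c))) (Icc a b) x :=
      by have := (Real.hasDerivAt_log hp2.ne').comp_hasDerivWithinAt x hd2; exact this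
    have hdu : HasDerivWithinAt u
        (((1 + v x)⁻¹ * (ρ' x / c) - (1 - v x)⁻¹ * (-(ρ' x / c))) / 2) (Icc a b) x :=
      (h1.sub h2).div_const 2
    have hdg : HasDerivWithinAt g
        ((((1 + v x)⁻¹ * (ρ' x / c) - (1 - v x)⁻¹ * (-(ρ' x / c))) / 2) - c / ε)
        (Icc a b) x := by
      have : HasDerivWithinAt (fun y => c * y / ε) (c / ε) (Icc a b) x := by
        simpa using ((hasDerivWithinAt_id x (Icc a b)).const_mul c).div_const ε
      exact hdu.sub this
    convert hdg using 1
    -- show the derivative is zero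
    have key : ε * ρ' x = c ^ 2 * (1 - v x ^ 2) := by
      have := heq x hx
      have hvx : v x * c = ρ x - 1/2 := by
        rw [hv]; field_simp
      have hsq : v x ^ 2 * c ^ 2 = (ρ x - 1/2) ^ 2 := by
        rw [← mul_pow, hvx]
      linear_combination this - hc2 + hsq
    have h1v : 1 - v x ^ 2 > 0 := by nlinarith
    have h1v : (0:ℝ) < 1 - v x ^ 2 := by nlinarith
    clear_value g u v
    field_simp
    linear_combination (-2) * key
  have hgcont : ContinuousOn g (Icc a b) := fun x hx => (hgderiv x hx).continuousWithinAt
  have hconst : ∀ x ∈ Icc a b, g x = g a := by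
    apply constant_of_has_deriv_right_zero hgcont
    intro x hx
    exact (hgderiv x (Ico_subset_Icc_self hx)).mono_of_mem_nhdsWithin
      (Icc_mem_nhdsGE_of_mem hx)
  -- choose the shift
  refine ⟨a - ε * u a / c, ?_⟩
  intro x hx
  have hgx := hconst x hx
  have hux : u x = c * (x - (a - ε * u a / c)) / ε := by
    have h0 : u x - c * x / ε = u a - c * a / ε := hgx
    have hux' : u x = c * (x - a) / ε + u a := by linear_combination h0
    rw [hux']; field_simp; ring
  obtain ⟨hb1, hb2⟩ := hvmem x hx
  have hp1 : 0 < 1 + v x := by linarith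
  have hp2 : 0 < 1 - v x := by linarith
  have hulog : u x = Real.log ((1 + v x) / (1 - v x)) / 2 := by
    rw [hu, Real.log_div hp1.ne' hp2.ne']
  have htanh : Real.tanh (c * (x - (a - ε * u a / c)) / ε) = v x := by
    rw [← hux, hulog]
    exact tanh_half_log hb1 hb2
  rw [htanh]
  rw [hv]
  field_simp
  ring
end

section
/- Let L > 0, ε > 0 and J ∈ ℝ. If there exists a differentiable function ρ : [0,L] → ℝ satisfying ε·ρ'(x) = ρ(x)·(1 − ρ(x)) − J for all x ∈ [0,L], then J < 1/4 + (π·ε/L)². -/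
open Set

/-- Maximal admissible flux in a straight corridor of length `L`: if `ε·ρ' = ρ(1−ρ) − J`
has a solution on `[0,L]`, then `J < 1/4 + (π·ε/L)²`. -/
theorem maximal_flux_straight_corridor
    (L ε J : ℝ) (hL : 0 < L) (hε : 0 < ε)
    (h : ∃ (ρ ρ' : ℝ → ℝ),
      (∀ x ∈ Icc (0:ℝ) L, HasDerivWithinAt ρ (ρ' x) (Icc 0 L) x) ∧
      (∀ x ∈ Icc (0:ℝ) L, ε * ρ' x = ρ x * (1 - ρ x) - J)) :
    J < 1/4 + (Real.pi * ε / L)^2 := by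
  by_contra hc
  push_neg at hc
  obtain ⟨ρ, ρ', hd, ho⟩ := h
  have hπ : 0 < Real.pi * ε / L := by positivity
  have hJ : (0:ℝ) < J - 1/4 := by nlinarith [sq_nonneg (Real.pi * ε / L)]
  set a := Real.sqrt (J - 1/4) with ha
  have ha0 : 0 < a := Real.sqrt_pos.mpr hJ
  have ha2 : a ^ 2 = J - 1/4 := Real.sq_sqrt hJ.le
  have haπ : Real.pi * ε / L ≤ a := by
    nlinarith [sq_nonneg (a - Real.pi * ε / L)]
  set ψ : ℝ → ℝ := fun x => Real.arctan ((ρ x - 1/2)/a) + (a/ε) * x with hψ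
  have hdψ : ∀ x ∈ Icc (0:ℝ) L, HasDerivWithinAt ψ 0 (Icc 0 L) x := by
    intro x hx
    have h1 : HasDerivWithinAt (fun y => (ρ y - 1/2)/a) (ρ' x / a) (Icc 0 L) x :=
      ((hd x hx).sub_const _).div_const a
    have h2 := (Real.hasDerivAt_arctan ((ρ x - 1/2)/a)).comp_hasDerivWithinAt x h1
    have h3 : HasDerivWithinAt (fun y => (a/ε) * y) (a/ε) (Icc 0 L) x := by
      simpa using ((hasDerivAt_id x).const_mul (a/ε)).hasDerivWithinAt
    have h4 := h2.add h3
    have key : (1 + ((ρ x - 1/2)/a)^2)⁻¹ * (ρ' x / a) + a/ε = 0 := by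
      have hode := ho x hx
      have hρ' : ρ' x = -(((ρ x - 1/2)^2 + a^2)) / ε := by
        field_simp
        nlinarith [hode]
      rw [hρ']
      have hden : (0:ℝ) < 1 + ((ρ x - 1/2)/a)^2 := by positivity
      field_simp
      ring
    rw [one_div (1 + ((ρ x - 1/2)/a)^2), key] at h4
    exact h4
  have heq : ψ L = ψ 0 := by
    have := Convex.norm_image_sub_le_of_norm_hasDerivWithin_le
      (f := ψ) (f' := fun _ => (0:ℝ)) (C := 0)
      hdψ (fun x hx => by simp) (convex_Icc 0 L)
      (left_mem_Icc.mpr hL.le) (right_mem_Icc.mpr hL.le)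
    simp at this
    linarith [abs_nonneg (ψ L - ψ 0), this]
  have hlt1 := Real.arctan_lt_pi_div_two ((ρ 0 - 1/2)/a)
  have hlt2 := Real.neg_pi_div_two_lt_arctan ((ρ L - 1/2)/a)
  have hψL : Real.arctan ((ρ L - 1/2)/a) + (a/ε) * L = Real.arctan ((ρ 0 - 1/2)/a) := by
    simpa [hψ] using heq
  have : (a/ε) * L < Real.pi := by linarith
  have : Real.pi ≤ (a/ε) * L := by
    rw [div_mul_eq_mul_div, le_div_iff₀ hε]
    calc Real.pi * ε = (Real.pi * ε / L) * L := by field_simp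
    _ ≤ a * L := by nlinarith
  linarith
end
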